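/- For any formal power series f over a field of characteristic zero with f(0) = 0 and nonzero linear coefficient, f has a compositional inverse g, and for every k ≥ 1 the coefficient of t^k in g equals (1/k) times the coefficient of u^(k-1) in (u/f(u))^k. -/

import Mathlib

open PowerSeries Finset

/-- Composition (substitution) of formal power series; correct when the
series being substituted has zero constant term. -/
noncomputable def psComp {K : Type*} [Field K] (f g : PowerSeries K) : PowerSeries K :=
  PowerSeries.mk fun n => ∑ k ∈ Finset.range (n + 1), (coeff k f) * (coeff n (g ^ k))

namespace LagrangeAux

variable {K : Type*} [Field K]

theorem coeff_psComp (A C : PowerSeries K) (n : ℕ) :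
    coeff n (psComp A C) = ∑ k ∈ range (n + 1), coeff k A * coeff n (C ^ k) :=
  coeff_mk _ _

theorem coeff_pow_mul_eq_zero {C : PowerSeries K} (hC : coeff 0 C = 0)
    {n k : ℕ} (h : n < k) (E : PowerSeries K) : coeff n (C ^ k * E) = 0 := by
  have hX : (X : PowerSeries K) ^ k ∣ C ^ k * E :=
    dvd_mul_of_dvd_left (pow_dvd_pow_of_dvd (X_dvd_iff.mpr (by simpa using hC)) k) E
  exact X_pow_dvd_iff.mp hX n h

theorem coeff_pow_eq_zero {C : PowerSeries K} (hC : coeff 0 C = 0)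
    {n k : ℕ} (h : n < k) : coeff n (C ^ k) = 0 := by
  simpa using coeff_pow_mul_eq_zero hC h 1

theorem coeff_psComp_ext (A C : PowerSeries K) (hC : coeff 0 C = 0) {n N : ℕ}
    (hN : n < N) :
    coeff n (psComp A C) = ∑ k ∈ range N, coeff k A * coeff n (C ^ k) := by
  rw [coeff_psComp]
  apply Finset.sum_subset (Finset.range_subset_range.mpr hN)
  intro k _ hk
  rw [coeff_pow_eq_zero hC (by simpa using hk), mul_zero]

theorem psComp_one (C : PowerSeries K) : psComp (1 : PowerSeries K) C = 1 := by
  ext n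
  rw [coeff_psComp]
  simp [coeff_one, ite_mul]

theorem psComp_mul (A B C : PowerSeries K) (hC : coeff 0 C = 0) :
    psComp (A * B) C = psComp A C * psComp B C := by
  ext n
  set N := n + 1 with hNdef
  have hbi : (range N).biUnion Finset.HasAntidiagonal.antidiagonal
      = (range N ×ˢ range N).filter (fun p => p.1 + p.2 < N) := by
    ext ⟨i, j⟩
    simp only [Finset.mem_biUnion, Finset.mem_range, Finset.mem_filter, Finset.mem_product,
      Finset.HasAntidiagonal.mem_antidiagonal]
    constructor
    · rintro ⟨k, hk, rfl⟩
      exact ⟨⟨lt_of_le_of_lt (Nat.le_add_right _ _) hk,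
        lt_of_le_of_lt (Nat.le_add_left _ _) hk⟩, hk⟩
    · rintro ⟨-, h⟩
      exact ⟨i + j, h, rfl⟩
  have hdisj : ((range N : Finset ℕ) : Set ℕ).PairwiseDisjoint Finset.HasAntidiagonal.antidiagonal := by
    intro a _ b _ hab
    simp only [Function.onFun]
    rw [Finset.disjoint_left]
    rintro ⟨i, j⟩ hi hj
    rw [Finset.HasAntidiagonal.mem_antidiagonal] at hi hj
    exact hab (hi ▸ hj)
  have hL : coeff n (psComp (A * B) C)
      = ∑ p ∈ (range N ×ˢ range N).filter (fun p => p.1 + p.2 < N),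
          coeff p.1 A * coeff p.2 B * coeff n (C ^ (p.1 + p.2)) := by
    rw [coeff_psComp, ← hbi, Finset.sum_biUnion hdisj]
    apply Finset.sum_congr rfl
    intro k _
    rw [PowerSeries.coeff_mul, Finset.sum_mul]
    apply Finset.sum_congr rfl
    intro p hp
    rw [Finset.HasAntidiagonal.mem_antidiagonal] at hp
    rw [hp]
  have hR : coeff n (psComp A C * psComp B C)
      = ∑ p ∈ range N ×ˢ range N,
          coeff p.1 A * coeff p.2 B * coeff n (C ^ (p.1 + p.2)) := by
    rw [PowerSeries.coeff_mul]
    have step1 : ∀ q ∈ Finset.HasAntidiagonal.antidiagonal n,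
        coeff q.1 (psComp A C) * coeff q.2 (psComp B C)
        = ∑ i ∈ range N, ∑ j ∈ range N,
            coeff i A * coeff j B * (coeff q.1 (C ^ i) * coeff q.2 (C ^ j)) := by
      intro q hq
      rw [Finset.HasAntidiagonal.mem_antidiagonal] at hq
      rw [coeff_psComp_ext A C hC (show q.1 < N by omega),
          coeff_psComp_ext B C hC (show q.2 < N by omega), Finset.sum_mul_sum]
      exact Finset.sum_congr rfl fun i _ => Finset.sum_congr rfl fun j _ => by ring
    rw [Finset.sum_congr rfl step1, Finset.sum_comm]
    rw [Finset.sum_product]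
    apply Finset.sum_congr rfl
    intro i _
    rw [Finset.sum_comm]
    apply Finset.sum_congr rfl
    intro j _
    rw [pow_add, PowerSeries.coeff_mul, Finset.mul_sum]
  rw [hL, hR]
  apply Finset.sum_subset (Finset.filter_subset _ _)
  intro p hmem hp
  rw [Finset.mem_filter] at hp
  have : n < p.1 + p.2 := by
    rcases Nat.lt_or_ge n (p.1 + p.2) with h | h
    · exact h
    · exact absurd ⟨hmem, by omega⟩ hp
  rw [coeff_pow_eq_zero hC this, mul_zero]
theorem psComp_pow (A C : PowerSeries K) (hC : coeff 0 C = 0) (m : ℕ) :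
    psComp (A ^ m) C = (psComp A C) ^ m := by
  induction m with
  | zero => simpa using psComp_one C
  | succ m ih => rw [pow_succ, psComp_mul _ _ _ hC, ih, pow_succ]


/-- Coefficients of the compositional inverse, defined recursively. -/
noncomputable def bco (f : PowerSeries K) : ℕ → K
  | 0 => 0
  | 1 => (coeff 1 f)⁻¹
  | n + 2 => -((coeff 1 f) ^ (n + 2))⁻¹ *
      ∑ m ∈ (Finset.range (n + 2)).attach, bco f m.1 * coeff (n + 2) (f ^ (m.1 : ℕ))
decreasing_by exact Finset.mem_range.mp m.2

theorem bco_zero (f : PowerSeries K) : bco f 0 = 0 := by rw [bco]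

theorem bco_one (f : PowerSeries K) : bco f 1 = (coeff 1 f)⁻¹ := by rw [bco]

theorem bco_add_two (f : PowerSeries K) (n : ℕ) :
    bco f (n + 2) = -((coeff 1 f) ^ (n + 2))⁻¹ *
      ∑ m ∈ Finset.range (n + 2), bco f m * coeff (n + 2) (f ^ m) := by
  rw [bco, ← Finset.sum_attach (Finset.range (n + 2)) (fun m => bco f m * coeff (n + 2) (f ^ m))]

theorem f_eq_X_mul (f : PowerSeries K) (h0 : coeff 0 f = 0) :
    f = X * (PowerSeries.mk fun i => coeff (i + 1) f) := by
  ext n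
  cases n with
  | zero => simpa using h0
  | succ n => rw [coeff_succ_X_mul, coeff_mk]

theorem coeff_f_pow (f : PowerSeries K) (h0 : coeff 0 f = 0) (m d : ℕ) :
    coeff (d + m) (f ^ m) = coeff d ((PowerSeries.mk fun i => coeff (i + 1) f) ^ m) := by
  conv_lhs => rw [f_eq_X_mul f h0, mul_pow, coeff_X_pow_mul]

theorem coeff_f_pow_self (f : PowerSeries K) (h0 : coeff 0 f = 0) (m : ℕ) :
    coeff m (f ^ m) = (coeff 1 f) ^ m := by
  have := coeff_f_pow f h0 m 0
  simp only [zero_add] at this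
  rw [this, coeff_zero_eq_constantCoeff, map_pow, PowerSeries.constantCoeff_mk]

theorem psComp_g_f (f : PowerSeries K) (h0 : coeff 0 f = 0) (h1 : coeff 1 f ≠ 0) :
    psComp (PowerSeries.mk (bco f)) f = X := by
  ext n
  rw [coeff_psComp]
  simp only [coeff_mk]
  match n with
  | 0 =>
    simp [bco_zero]
  | 1 =>
    rw [Finset.sum_range_succ, Finset.sum_range_one]
    simp only [pow_zero, pow_one, bco_zero, bco_one, zero_mul, zero_add]
    rw [inv_mul_cancel₀ h1]
    simp
  | (n + 2) =>
    rw [Finset.sum_range_succ, bco_add_two, coeff_f_pow_self f h0, PowerSeries.coeff_X,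
      if_neg (by omega : ¬ (n + 2) = 1)]
    have hx : ((coeff 1 f) ^ (n + 2) : K) ≠ 0 := pow_ne_zero _ h1
    field_simp
    ring


theorem psComp_f_g (f : PowerSeries K) (h0 : coeff 0 f = 0) (h1 : coeff 1 f ≠ 0) :
    psComp f (PowerSeries.mk (bco f)) = X := by
  set g := PowerSeries.mk (bco f) with hg
  have hg0 : coeff 0 g = 0 := by simp [hg, coeff_mk, bco_zero]
  have hgf : ∀ j : ℕ, psComp (g ^ j) f = X ^ j := fun j => by
    rw [psComp_pow _ _ h0, psComp_g_f f h0 h1]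
  ext n
  match n with
  | 0 =>
    rw [coeff_psComp]
    simp [h0]
  | (ℓ + 1) =>
    set s := ℓ + 1 with hs
    set P : Matrix (Fin s) (Fin s) K :=
      fun i j => coeff ((i : ℕ) + 1) (f ^ ((j : ℕ) + 1)) with hP
    set Q : Matrix (Fin s) (Fin s) K :=
      fun i j => coeff ((i : ℕ) + 1) (g ^ ((j : ℕ) + 1)) with hQ
    have hPQ : P * Q = 1 := by
      ext i j
      rw [Matrix.mul_apply]
      have hcomp := congrArg (coeff ((i : ℕ) + 1)) (hgf ((j : ℕ) + 1))
      rw [coeff_psComp_ext (g ^ ((j : ℕ) + 1)) f h0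
        (show (i : ℕ) + 1 < s + 1 by omega)] at hcomp
      rw [Finset.sum_range_succ'] at hcomp
      have hzero : coeff 0 (g ^ ((j : ℕ) + 1)) * coeff ((i : ℕ) + 1) (f ^ 0) = 0 := by
        have hcc : constantCoeff g = 0 := by
          rw [← coeff_zero_eq_constantCoeff_apply]; exact hg0
        rw [coeff_zero_eq_constantCoeff, map_pow, hcc, zero_pow (by omega), zero_mul]
      rw [hzero, add_zero] at hcomp
      have hfin : ∑ m : Fin s, P i m * Q m j
          = ∑ m ∈ Finset.range s,
              coeff ((m : ℕ) + 1) (g ^ ((j : ℕ) + 1)) * coeff ((i : ℕ) + 1) (f ^ ((m : ℕ) + 1)) := by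
        rw [Fin.sum_univ_eq_sum_range
          (fun m => coeff ((i : ℕ) + 1) (f ^ (m + 1)) * coeff (m + 1) (g ^ ((j : ℕ) + 1)))]
        exact Finset.sum_congr rfl fun m _ => mul_comm _ _
      rw [hfin, hcomp, coeff_X_pow, Matrix.one_apply]
      by_cases hij : i = j
      · rw [if_pos hij, if_pos (by rw [hij])]
      · rw [if_neg hij, if_neg (by
          intro hc
          exact hij (Fin.ext (by omega)))]
    have hQP : Q * P = 1 := mul_eq_one_comm.mp hPQ
    have hiℓ : (ℓ : ℕ) < s := by omega
    have hentry := congrFun (congrFun hQP ⟨ℓ, hiℓ⟩) ⟨0, by omega⟩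
    rw [Matrix.mul_apply, Matrix.one_apply] at hentry
    have hfin2 : ∑ m : Fin s, Q ⟨ℓ, hiℓ⟩ m * P m ⟨0, by omega⟩
        = ∑ m ∈ Finset.range s,
            coeff (m + 1) f * coeff (ℓ + 1) (g ^ (m + 1)) := by
      rw [Fin.sum_univ_eq_sum_range
        (fun m => coeff (ℓ + 1) (g ^ (m + 1)) * coeff (m + 1) (f ^ (0 + 1)))]
      exact Finset.sum_congr rfl fun m _ => by rw [zero_add, pow_one, mul_comm]
    rw [hfin2] at hentry
    rw [coeff_psComp, Finset.sum_range_succ', h0, zero_mul, add_zero, hentry,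
      PowerSeries.coeff_X]
    by_cases hℓ : ℓ = 0
    · subst hℓ; simp [hs]
    · rw [if_neg (by exact fun hc => hℓ (by simpa using (Fin.mk.injEq _ _ _ _ ▸ hc : _))), if_neg (by omega)]


variable [CharZero K]

theorem mulinv (f : PowerSeries K) (h1 : coeff 1 f ≠ 0) :
    (PowerSeries.mk fun i => coeff (i + 1) f) * (PowerSeries.mk fun i => coeff (i + 1) f)⁻¹
      = 1 :=
  PowerSeries.mul_inv_cancel _ (by simpa [PowerSeries.constantCoeff_mk] using h1)

theorem f_mul_inv (f : PowerSeries K) (h0 : coeff 0 f = 0) (h1 : coeff 1 f ≠ 0) :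
    f * (PowerSeries.mk fun i => coeff (i + 1) f)⁻¹ = X := by
  set F := (PowerSeries.mk fun i => coeff (i + 1) f) with hF
  have hf : f = X * F := f_eq_X_mul f h0
  rw [hf, mul_assoc]
  have hm := mulinv f h1
  rw [← hF] at hm
  rw [hm, mul_one]

/-- The basic residue lemma: the residue of `f' / f^(j'+1)` is `δ_{j',0}`. -/
theorem residue_lemma (f : PowerSeries K) (h0 : coeff 0 f = 0) (h1 : coeff 1 f ≠ 0)
    (j' : ℕ) :
    coeff j' ((d⁄dX K f) * (PowerSeries.mk fun i => coeff (i + 1) f)⁻¹ ^ (j' + 1))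
      = if j' = 0 then 1 else 0 := by
  set h := (PowerSeries.mk fun i => coeff (i + 1) f)⁻¹ with hh
  have hfh : f * h = X := f_mul_inv f h0 h1
  have hd : f * (d⁄dX K h) + h * (d⁄dX K f) = 1 := by
    have := congrArg (d⁄dX K) hfh
    rwa [Derivation.leibniz, smul_eq_mul, smul_eq_mul, derivative_X] at this
  have hkey : h * (d⁄dX K f) = 1 - f * (d⁄dX K h) := by linear_combination hd
  match j' with
  | 0 =>
    rw [if_pos rfl, pow_one, mul_comm, hkey, map_sub]
    have : coeff 0 (f * (d⁄dX K h)) = 0 := by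
      have h0' : constantCoeff f = 0 := by
        rw [← coeff_zero_eq_constantCoeff_apply]; exact h0
      rw [coeff_zero_eq_constantCoeff, map_mul, h0', zero_mul]
    rw [this]
    simp
  | (j'' + 1) =>
    rw [if_neg (by omega)]
    have hexp : (d⁄dX K f) * h ^ (j'' + 2)
        = h ^ (j'' + 1) - X * ((d⁄dX K h) * h ^ (j'')) := by
      calc (d⁄dX K f) * h ^ (j'' + 2) = (h * d⁄dX K f) * h ^ (j'' + 1) := by ring
        _ = (1 - f * (d⁄dX K h)) * h ^ (j'' + 1) := by rw [hkey]
        _ = h ^ (j'' + 1) - (f * h) * ((d⁄dX K h) * h ^ j'') := by ring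
        _ = h ^ (j'' + 1) - X * ((d⁄dX K h) * h ^ (j'')) := by rw [hfh]
    rw [hexp, map_sub, coeff_succ_X_mul]
    have hpow : coeff j'' ((d⁄dX K h) * h ^ j'')
        = coeff (j'' + 1) (h ^ (j'' + 1)) := by
      have hlp : (d⁄dX K) (h ^ (j'' + 1)) = (j'' + 1) • (h ^ j'' * (d⁄dX K h)) := by
        rw [Derivation.leibniz_pow]
        simp [smul_eq_mul]  -- may need adjustment
      have hc1 : coeff j'' ((d⁄dX K) (h ^ (j'' + 1)))
          = coeff (j'' + 1) (h ^ (j'' + 1)) * (j'' + 1) := coeff_derivative _ _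
      rw [hlp] at hc1
      rw [map_nsmul, nsmul_eq_mul] at hc1
      have hne : ((j'' : K) + 1) ≠ 0 := by
        have h' : ((j'' + 1 : ℕ) : K) ≠ 0 := Nat.cast_ne_zero.mpr (by omega)
        push_cast at h'; exact h'
      apply mul_left_cancel₀ hne
      push_cast at hc1
      rw [mul_comm (d⁄dX K h) (h ^ j'')]
      linear_combination hc1
    rw [hpow]
    ring


theorem residue_lemma' (f : PowerSeries K) (h0 : coeff 0 f = 0) (h1 : coeff 1 f ≠ 0)
    (m' j' : ℕ) :
    coeff (m' + j') ((d⁄dX K f) *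
        ((PowerSeries.mk fun i => coeff (i + 1) f)⁻¹ ^ (m' + j' + 1) * f ^ m'))
      = if j' = 0 then 1 else 0 := by
  set h := (PowerSeries.mk fun i => coeff (i + 1) f)⁻¹ with hh
  have hfh : f * h = X := f_mul_inv f h0 h1
  have hsplit : h ^ (m' + j' + 1) * f ^ m' = X ^ m' * h ^ (j' + 1) := by
    have e1 : h ^ (m' + j' + 1) * f ^ m' = (f * h) ^ m' * h ^ (j' + 1) := by ring
    rw [e1, hfh]
  rw [hsplit]
  have e2 : (d⁄dX K f) * (X ^ m' * h ^ (j' + 1)) = X ^ m' * ((d⁄dX K f) * h ^ (j' + 1)) := by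
    ring
  rw [e2, add_comm m' j', coeff_X_pow_mul]
  exact residue_lemma f h0 h1 j'

theorem key_formula (f : PowerSeries K) (h0 : coeff 0 f = 0) (h1 : coeff 1 f ≠ 0)
    (k' : ℕ) :
    coeff k' ((PowerSeries.mk fun i => coeff (i + 1) f)⁻¹ ^ (k' + 1))
      = ((k' + 1 : ℕ) : K) * bco f (k' + 1) := by
  set h := (PowerSeries.mk fun i => coeff (i + 1) f)⁻¹ with hh
  -- the differentiated composition identity
  have him : ∀ m q : ℕ, ((m : K)) * coeff q (f ^ (m - 1) * d⁄dX K f)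
      = coeff (q + 1) (f ^ m) * ((q : K) + 1) := by
    intro m q
    have hd := coeff_derivative (f ^ m) q
    rw [Derivation.leibniz_pow, smul_eq_mul, map_nsmul, nsmul_eq_mul] at hd
    push_cast
    linear_combination hd
  have hcr : ∀ q : ℕ, ∑ m ∈ range (q + 2),
      bco f m * ((m : K) * coeff q (f ^ (m - 1) * d⁄dX K f)) = if q = 0 then 1 else 0 := by
    intro q
    have hgf := congrArg (coeff (q + 1)) (psComp_g_f f h0 h1)
    rw [coeff_psComp] at hgf
    simp only [coeff_mk] at hgf
    have hstep : ∑ m ∈ range (q + 2), bco f m * ((m : K) * coeff q (f ^ (m - 1) * d⁄dX K f))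
        = (∑ m ∈ range (q + 2), bco f m * coeff (q + 1) (f ^ m)) * ((q : K) + 1) := by
      rw [Finset.sum_mul]
      apply Finset.sum_congr rfl
      intro m _
      rw [him m q]
      ring
    rw [hstep, hgf, PowerSeries.coeff_X]
    by_cases hq : q = 0
    · subst hq; norm_num
    · rw [if_neg (by omega), if_neg hq, zero_mul]
  -- main computation
  have h1' : coeff k' (h ^ (k' + 1)) = coeff k' (h ^ (k' + 1) * 1) := by rw [mul_one]
  rw [h1', PowerSeries.coeff_mul]
  have hsub : ∀ p ∈ Finset.HasAntidiagonal.antidiagonal k',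
      coeff p.1 (h ^ (k' + 1)) * coeff p.2 (1 : PowerSeries K)
      = ∑ m ∈ range (k' + 2), coeff p.1 (h ^ (k' + 1)) *
          (bco f m * ((m : K) * coeff p.2 (f ^ (m - 1) * d⁄dX K f))) := by
    intro p hp
    rw [Finset.HasAntidiagonal.mem_antidiagonal] at hp
    have hext : (∑ m ∈ range (p.2 + 2),
          bco f m * ((m : K) * coeff p.2 (f ^ (m - 1) * d⁄dX K f)))
        = ∑ m ∈ range (k' + 2), bco f m * ((m : K) * coeff p.2 (f ^ (m - 1) * d⁄dX K f)) := by
      apply Finset.sum_subset (Finset.range_subset_range.mpr (by omega))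
      intro m _ hm
      have hmgt : p.2 + 2 ≤ m := by simpa using hm
      rw [coeff_pow_mul_eq_zero h0 (show p.2 < m - 1 by omega), mul_zero, mul_zero]
    rw [PowerSeries.coeff_one, show ((if p.2 = 0 then 1 else 0 : K))
        = ∑ m ∈ range (p.2 + 2), bco f m * ((m : K) * coeff p.2 (f ^ (m - 1) * d⁄dX K f))
        from (hcr p.2).symm, hext, Finset.mul_sum]
  rw [Finset.sum_congr rfl hsub, Finset.sum_comm]
  have hterm : ∀ m ∈ range (k' + 2),
      (∑ p ∈ Finset.HasAntidiagonal.antidiagonal k', coeff p.1 (h ^ (k' + 1)) *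
        (bco f m * ((m : K) * coeff p.2 (f ^ (m - 1) * d⁄dX K f))))
      = bco f m * (m : K) * coeff k' (h ^ (k' + 1) * (f ^ (m - 1) * d⁄dX K f)) := by
    intro m _
    rw [PowerSeries.coeff_mul, Finset.mul_sum]
    apply Finset.sum_congr rfl
    intro p _
    ring
  rw [Finset.sum_congr rfl hterm]
  rw [Finset.sum_eq_single (k' + 1)]
  · have hres := residue_lemma' f h0 h1 k' 0
    rw [if_pos rfl] at hres
    have e3 : h ^ (k' + 1) * (f ^ (k' + 1 - 1) * d⁄dX K f)
        = (d⁄dX K f) * (h ^ (k' + 0 + 1) * f ^ k') := by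
      simp only [Nat.add_sub_cancel, Nat.add_zero]
      ring
    rw [e3, show k' = k' + 0 from rfl] at *
    rw [hres]
    push_cast
    ring
  · intro m hm hne
    rw [Finset.mem_range] at hm
    match m with
    | 0 => simp [bco_zero]
    | (m'' + 1) =>
      have hlt : m'' < k' := by omega
      obtain ⟨j'', rfl⟩ := Nat.exists_eq_add_of_lt hlt
      have hres := residue_lemma' f h0 h1 m'' (j'' + 1)
      rw [if_neg (by omega)] at hres
      have e5 : (m'' + j'' + 1 : ℕ) = m'' + (j'' + 1) := by omega
      rw [e5]
      have e4 : h ^ (m'' + (j'' + 1) + 1) * (f ^ (m'' + 1 - 1) * d⁄dX K f)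
          = (d⁄dX K f) * (h ^ (m'' + (j'' + 1) + 1) * f ^ m'') := by
        simp only [Nat.add_sub_cancel]
        ring
      rw [e4, hres, mul_zero]
  · intro hnot
    exact absurd (Finset.self_mem_range_succ (k' + 1)) hnot

end LagrangeAux


open LagrangeAux in
/-- Lagrange inversion: a power series `f` with `f(0) = 0` and nonzero linear
coefficient has a compositional inverse `g`, whose `k`-th coefficient equals
`(1/k)` times the `(k-1)`-st coefficient of `(u / f(u))^k`, where `u / f(u)` is
the inverse of the unit power series `f(u)/u`. -/
theorem lagrange_inversion {K : Type*} [Field K] [CharZero K]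
    (f : PowerSeries K) (h0 : coeff 0 f = 0) (h1 : coeff 1 f ≠ 0) :
    ∃ g : PowerSeries K, coeff 0 g = 0 ∧ psComp f g = PowerSeries.X ∧
      psComp g f = PowerSeries.X ∧
      ∀ k : ℕ, 1 ≤ k →
        coeff k g =
          (k : K)⁻¹ * coeff (k - 1) ((PowerSeries.mk fun i => coeff (i + 1) f)⁻¹ ^ k) := by
  refine ⟨PowerSeries.mk (bco f), by simp [coeff_mk, bco_zero],
    psComp_f_g f h0 h1, psComp_g_f f h0 h1, ?_⟩
  intro k hk
  obtain ⟨k', rfl⟩ : ∃ k', k = k' + 1 := ⟨k - 1, by omega⟩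
  rw [coeff_mk, Nat.add_sub_cancel, key_formula f h0 h1 k']
  have hne : ((k' + 1 : ℕ) : K) ≠ 0 := Nat.cast_ne_zero.mpr (by omega)
  field_simp
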